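/- For every flow F on X, the relation A_F = {(x, y) ∈ X × X : L(x) ≥ L(y) for every Lyapunov function L of F} is an F-stream, and it is the smallest F-stream: A_F ⊆ D for every F-stream D. -/

import Mathlib

open Set Filter Topology

/-- A (continuous-time) flow on a topological space. -/
def IsFlow {X : Type*} [TopologicalSpace X] (F : ℝ → X → X) : Prop :=
  Continuous (fun q : ℝ × X => F q.1 q.2) ∧ (∀ x, F 0 x = x) ∧
    ∀ t s x, F t (F s x) = F (t + s) x

/-- The forward orbit O⁺(p). -/
def fwdOrbit {X : Type*} (F : ℝ → X → X) (p : X) : Set X :=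
  {q | ∃ t : ℝ, 0 ≤ t ∧ F t p = q}

/-- The backward orbit O⁻(p). -/
def bwdOrbit {X : Type*} (F : ℝ → X → X) (p : X) : Set X :=
  {q | ∃ t : ℝ, t ≤ 0 ∧ F t p = q}

/-- The orbit O(p) = O⁻(p) ∪ O⁺(p). -/
def flowOrbit {X : Type*} (F : ℝ → X → X) (p : X) : Set X :=
  bwdOrbit F p ∪ fwdOrbit F p

/-- The orbit relation O_F. -/
def orbitRel {X : Type*} (F : ℝ → X → X) : Set (X × X) :=
  {z | z.2 ∈ fwdOrbit F z.1}

/-- The prolongational relation P_F: the closure of the orbit relation. -/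
def prolongRel {X : Type*} [TopologicalSpace X] (F : ℝ → X → X) : Set (X × X) :=
  closure (orbitRel F)

/-- Down(p) = {q | (p,q) ∈ P_F}. -/
def downSet {X : Type*} [TopologicalSpace X] (F : ℝ → X → X) (p : X) : Set X :=
  {q | (p, q) ∈ prolongRel F}

/-- The first prolongational limit set Λ¹(p). -/
def lambda1 {X : Type*} [MetricSpace X] (F : ℝ → X → X) (p : X) : Set X :=
  {q | ∀ ε > (0 : ℝ), ∀ T > (0 : ℝ), ∃ x : X, ∃ t : ℝ,
    T ≤ t ∧ dist x p < ε ∧ dist (F t x) q < ε}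

/-- The first prolongation D¹(p). -/
def prolong1 {X : Type*} [MetricSpace X] (F : ℝ → X → X) (p : X) : Set X :=
  {q | ∀ ε > (0 : ℝ), ∃ x : X, ∃ t : ℝ, 0 < t ∧ dist x p < ε ∧ dist (F t x) q < ε}

/-- The set NW_F of non-wandering points. -/
def nonWanderingSet {X : Type*} [MetricSpace X] (F : ℝ → X → X) : Set X :=
  {p | p ∈ lambda1 F p}

/-- A flow is wandering when it has no non-wandering point. -/
def IsWandering {X : Type*} [MetricSpace X] (F : ℝ → X → X) : Prop :=
  nonWanderingSet F = ∅

/-- The ω-limit set of p. -/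
def omegaLimitSet {X : Type*} [TopologicalSpace X] (F : ℝ → X → X) (p : X) : Set X :=
  {q | ∃ t : ℕ → ℝ, Tendsto t atTop atTop ∧ Tendsto (fun n => F (t n) p) atTop (𝓝 q)}

/-- The α-limit set of p. -/
def alphaLimitSet {X : Type*} [TopologicalSpace X] (F : ℝ → X → X) (p : X) : Set X :=
  {q | ∃ t : ℕ → ℝ, Tendsto t atTop atBot ∧ Tendsto (fun n => F (t n) p) atTop (𝓝 q)}

/-- A (continuous) Lyapunov function for the flow F. -/
def IsLyapunov {X : Type*} [TopologicalSpace X] (F : ℝ → X → X) (L : X → ℝ) : Prop :=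
  Continuous L ∧ ∀ p : X, ∀ q ∈ fwdOrbit F p, L q ≤ L p

/-- The Auslander relation A_F. -/
def auslanderRel {X : Type*} [MetricSpace X] (F : ℝ → X → X) : Set (X × X) :=
  {z | ∀ L : X → ℝ, IsLyapunov F L → L z.2 ≤ L z.1}

/-- An F-stream: a reflexive, transitive, closed relation containing P_F. -/
def IsStream {X : Type*} [MetricSpace X] (F : ℝ → X → X) (D : Set (X × X)) : Prop :=
  (∀ x : X, (x, x) ∈ D) ∧
  (∀ x y z : X, (x, y) ∈ D → (y, z) ∈ D → (x, z) ∈ D) ∧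
  IsClosed D ∧ prolongRel F ⊆ D


section AuslanderAux
namespace AuslanderAux
open Metric

set_option linter.unusedSectionVars false
set_option maxHeartbeats 1000000

variable {X : Type*} [MetricSpace X]


variable {X : Type*} [MetricSpace X]

/-- transpose of a relation -/
def transp (D : Set (X × X)) : Set (X × X) := Prod.swap ⁻¹' D

lemma mem_transp {D : Set (X × X)} {x y : X} : (x, y) ∈ transp D ↔ (y, x) ∈ D := Iff.rfl

/-- a closed preorder -/
structure IsPre (D : Set (X × X)) : Prop where
  refl : ∀ x : X, (x, x) ∈ D
  trans : ∀ ⦃x y z : X⦄, (x, y) ∈ D → (y, z) ∈ D → (x, z) ∈ D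
  closed : IsClosed D

lemma IsPre.transp {D : Set (X × X)} (h : IsPre D) : IsPre (transp D) :=
  ⟨fun x => h.refl x, fun _ _ _ a b => h.trans b a, h.closed.preimage continuous_swap⟩

/-- future of a set -/
def fut (D : Set (X × X)) (S : Set X) : Set X := {y | ∃ x ∈ S, (x, y) ∈ D}

lemma subset_fut {D : Set (X × X)} (h : ∀ x : X, (x, x) ∈ D) (S : Set X) : S ⊆ fut D S :=
  fun x hx => ⟨x, hx, h x⟩

/-- future-closedness (ambient) -/
def futC (D : Set (X × X)) (S : Set X) : Prop :=
  ∀ ⦃x y : X⦄, x ∈ S → (x, y) ∈ D → y ∈ S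

/-- future-closedness relative to an ambient set `Y` -/
def relFutC (D : Set (X × X)) (Y S : Set X) : Prop :=
  ∀ ⦃x y : X⦄, x ∈ S → y ∈ Y → (x, y) ∈ D → y ∈ S

lemma futC.compl_transp {D : Set (X × X)} {S : Set X} (h : futC (transp D) S) :
    futC D Sᶜ := fun x y hx hxy hy => hx (h hy hxy)

lemma relFutC.diff_transp {D : Set (X × X)} {Y S : Set X} (h : relFutC (transp D) Y S) :
    relFutC D Y (Y \ S) := fun x y hx hy hxy =>
  ⟨hy, fun hyS => hx.2 (h hyS hx.1 hxy)⟩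

lemma isClosed_fut {D : Set (X × X)} (hD : IsClosed D) {S : Set X} (hS : IsCompact S) :
    IsClosed (fut D S) := by
  apply IsSeqClosed.isClosed
  intro y q hy hq
  choose x hxS hxy using hy
  obtain ⟨a, haS, φ, hφ, ha⟩ := hS.tendsto_subseq hxS
  refine ⟨a, haS, ?_⟩
  have : Tendsto (fun n => (x (φ n), y (φ n))) atTop (𝓝 (a, q)) :=
    ha.prodMk_nhds (hq.comp hφ.tendsto_atTop)
  exact hD.isSeqClosed (fun n => hxy (φ n)) this

/-- upper semicontinuity of futures against a compact target -/
lemma usc {D : Set (X × X)} (hD : IsClosed D) {P : Set X} (hP : IsCompact P) {a : X}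
    (h : ∀ y ∈ P, (a, y) ∉ D) :
    ∃ ε > 0, ∀ x : X, dist x a < ε → ∀ y ∈ P, (x, y) ∉ D := by
  by_contra hc
  push_neg at hc
  have key : ∀ n : ℕ, ∃ x : X, dist x a < 1 / (n + 1) ∧ ∃ y ∈ P, (x, y) ∈ D := by
    intro n
    obtain ⟨x, hx1, hx2⟩ := hc (1 / (n + 1)) (by positivity)
    exact ⟨x, hx1, hx2⟩
  choose x hx y hyP hxy using key
  have hxa : Tendsto x atTop (𝓝 a) := by
    rw [tendsto_iff_dist_tendsto_zero]
    apply squeeze_zero (fun n => dist_nonneg) (fun n => le_of_lt (hx n))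
    exact tendsto_one_div_add_atTop_nhds_zero_nat
  obtain ⟨b, hbP, φ, hφ, hb⟩ := hP.tendsto_subseq hyP
  have : Tendsto (fun n => (x (φ n), y (φ n))) atTop (𝓝 (a, b)) :=
    ((hxa.comp hφ.tendsto_atTop).prodMk_nhds hb)
  exact h b hbP (hD.isSeqClosed (fun n => hxy (φ n)) this)

/-- the compact sandwich lemma -/
lemma sandwich {D : Set (X × X)} (hD : IsPre D) {Y F P : Set X} (hY : IsCompact Y)
    (hF : IsClosed F) (hFY : F ⊆ Y) (hP : IsClosed P) (hPY : P ⊆ Y)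
    (hsep : ∀ x ∈ F, ∀ y ∈ P, (x, y) ∉ D) :
    ∃ O C : Set X, IsOpen O ∧ F ⊆ O ∧ IsClosed C ∧ C ⊆ Y ∧ relFutC D Y C ∧
      O ∩ Y ⊆ C ∧ C ∩ P = ∅ := by
  have hPcpt : IsCompact P := hY.of_isClosed_subset hP hPY
  have hFcpt : IsCompact F := hY.of_isClosed_subset hF hFY
  have husc : ∀ a : X, a ∈ F → ∃ ε > 0, ∀ x : X, dist x a < ε → ∀ y ∈ P, (x, y) ∉ D :=
    fun a ha => usc hD.closed hPcpt (fun y hy => hsep a ha y hy)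
  choose! ε hε hspec using husc
  obtain ⟨t, htF, hcov⟩ := hFcpt.elim_nhds_subcover (fun a => ball a (ε a / 2))
    (fun a ha => ball_mem_nhds a (by have := hε a ha; positivity))
  refine ⟨⋃ a ∈ t, ball a (ε a / 2), ⋃ a ∈ t, (fut D (Y ∩ closedBall a (ε a / 2)) ∩ Y),
    ?_, hcov, ?_, ?_, ?_, ?_, ?_⟩
  · exact isOpen_biUnion fun a _ => isOpen_ball
  · exact isClosed_biUnion_finset fun a _ =>
      (isClosed_fut hD.closed (hY.inter_right Metric.isClosed_closedBall)).inter hY.isClosed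
  · exact iUnion₂_subset fun a _ => inter_subset_right
  · intro x y hx hyY hxy
    simp only [mem_iUnion] at hx ⊢
    obtain ⟨a, hat, ⟨⟨w, hw, hwx⟩, _⟩⟩ := hx
    exact ⟨a, hat, ⟨w, hw, hD.trans hwx hxy⟩, hyY⟩
  · rintro x ⟨hxO, hxY⟩
    simp only [mem_iUnion] at hxO ⊢
    obtain ⟨a, hat, hxa⟩ := hxO
    exact ⟨a, hat, ⟨x, ⟨hxY, mem_closedBall.2 (le_of_lt hxa)⟩, hD.refl x⟩, hxY⟩
  · ext z
    simp only [mem_inter_iff, mem_iUnion, mem_empty_iff_false, iff_false]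
    rintro ⟨⟨a, hat, ⟨⟨w, ⟨hwY, hwB⟩, hwz⟩, hzY⟩⟩, hzP⟩
    have : dist w a < ε a := lt_of_le_of_lt (mem_closedBall.1 hwB)
      (by have := hε a (htF a hat); linarith)
    exact hspec a (htF a hat) w this z hzP hwz


structure CState (D : Set (X × X)) (Y A B : Set X) where
  O : Set X
  C : Set X
  P : Set X
  Q : Set X
  hO : IsOpen O
  hC : IsClosed C
  hCY : C ⊆ Y
  hCfut : relFutC D Y C
  hOC : O ∩ Y ⊆ C
  hP : IsOpen P
  hQ : IsClosed Q
  hQY : Q ⊆ Y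
  hQfut : relFutC (transp D) Y Q
  hPQ : P ∩ Y ⊆ Q
  hCQ : C ∩ Q = ∅
  hAC : A ⊆ C
  hBQ : B ⊆ Q

variable {D : Set (X × X)} {Y A B : Set X}

lemma exists_cstate_step (hD : IsPre D) (hY : IsCompact Y) (s : CState D Y A B) :
    ∃ s' : CState D Y A B, s.C ⊆ s'.O ∧ s.Q ⊆ s'.P ∧ s'.C ∩ s.Q = ∅ ∧
      s.C ⊆ s'.C ∧ s.Q ⊆ s'.Q := by
  obtain ⟨O', C', hO', hCO', hC', hC'Y, hC'fut, hO'C', hC'Q⟩ :=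
    sandwich hD hY s.hC s.hCY s.hQ s.hQY (fun x hx y hy hxy => by
      have : y ∈ s.C := s.hCfut hx (s.hQY hy) hxy
      exact absurd (Set.mem_inter this hy) (by rw [s.hCQ]; exact notMem_empty y))
  obtain ⟨P', Q', hP', hQP', hQ', hQ'Y, hQ'fut, hP'Q', hQ'C'⟩ :=
    sandwich hD.transp hY s.hQ s.hQY hC' hC'Y (fun x hx y hy hxy => by
      have : x ∈ C' := hC'fut hy (s.hQY hx) hxy
      exact absurd (Set.mem_inter this hx) (by rw [hC'Q]; exact notMem_empty x))
  refine ⟨⟨O', C', P', Q', hO', hC', hC'Y, hC'fut, hO'C', hP', hQ', hQ'Y, hQ'fut, hP'Q',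
      ?_, ?_, ?_⟩, hCO', hQP', hC'Q, ?_, ?_⟩
  · rw [Set.inter_comm]; exact hQ'C'
  · exact fun a ha => hO'C' ⟨hCO' (s.hAC ha), s.hCY (s.hAC ha)⟩
  · exact fun b hb => hP'Q' ⟨hQP' (s.hBQ hb), s.hQY (s.hBQ hb)⟩
  · exact fun a ha => hO'C' ⟨hCO' ha, s.hCY ha⟩
  · exact fun b hb => hP'Q' ⟨hQP' hb, s.hQY hb⟩

lemma exists_cstate_base (hD : IsPre D) (hY : IsCompact Y) (hA : IsClosed A) (hAY : A ⊆ Y)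
    (hArel : relFutC D Y A) (hB : IsClosed B) (hBY : B ⊆ Y)
    (hBrel : relFutC (transp D) Y B) (hAB : A ∩ B = ∅) :
    ∃ s : CState D Y A B, A ⊆ s.O ∧ B ⊆ s.P := by
  obtain ⟨O₀, C₀, hO₀, hAO₀, hC₀, hC₀Y, hC₀fut, hO₀C₀, hC₀B⟩ :=
    sandwich hD hY hA hAY hB hBY (fun x hx y hy hxy => by
      have : y ∈ A := hArel hx (hBY hy) hxy
      exact absurd (Set.mem_inter this hy) (by rw [hAB]; exact notMem_empty y))
  obtain ⟨P₀, Q₀, hP₀, hBP₀, hQ₀, hQ₀Y, hQ₀fut, hP₀Q₀, hQ₀C₀⟩ :=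
    sandwich hD.transp hY hB hBY hC₀ hC₀Y (fun x hx y hy hxy => by
      have : x ∈ C₀ := hC₀fut hy (hBY hx) hxy
      exact absurd (Set.mem_inter this hx) (by rw [hC₀B]; exact notMem_empty x))
  refine ⟨⟨O₀, C₀, P₀, Q₀, hO₀, hC₀, hC₀Y, hC₀fut, hO₀C₀, hP₀, hQ₀, hQ₀Y, hQ₀fut, hP₀Q₀,
      ?_, fun a ha => hO₀C₀ ⟨hAO₀ ha, hAY ha⟩, fun b hb => hP₀Q₀ ⟨hBP₀ hb, hBY hb⟩⟩,
    hAO₀, hBP₀⟩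
  rw [Set.inter_comm]; exact hQ₀C₀

lemma compact_normality (hD : IsPre D) (hY : IsCompact Y) (hA : IsClosed A) (hAY : A ⊆ Y)
    (hArel : relFutC D Y A) (hB : IsClosed B) (hBY : B ⊆ Y)
    (hBrel : relFutC (transp D) Y B) (hAB : A ∩ B = ∅) :
    ∃ U V : Set X, (∃ O, IsOpen O ∧ U = O ∩ Y) ∧ (∃ P, IsOpen P ∧ V = P ∩ Y) ∧
      A ⊆ U ∧ B ⊆ V ∧ U ∩ V = ∅ ∧ relFutC D Y U ∧ relFutC (transp D) Y V := by
  obtain ⟨s₀, hs₀A, hs₀B⟩ := exists_cstate_base hD hA hAY hArel hB hBY hBrel hAB (hY := hY)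
  let f : ℕ → CState D Y A B := fun n =>
    Nat.rec s₀ (fun _ s => Classical.choose (exists_cstate_step hD hY s)) n
  have hstep : ∀ n, (f n).C ⊆ (f (n+1)).O ∧ (f n).Q ⊆ (f (n+1)).P ∧
      (f (n+1)).C ∩ (f n).Q = ∅ ∧ (f n).C ⊆ (f (n+1)).C ∧ (f n).Q ⊆ (f (n+1)).Q :=
    fun n => Classical.choose_spec (exists_cstate_step hD hY (f n))
  have hCmono : ∀ ⦃n m⦄, n ≤ m → (f n).C ⊆ (f m).C :=
    fun n m h => monotone_nat_of_le_succ (fun k => (hstep k).2.2.2.1) h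
  have hQmono : ∀ ⦃n m⦄, n ≤ m → (f n).Q ⊆ (f m).Q :=
    fun n m h => monotone_nat_of_le_succ (fun k => (hstep k).2.2.2.2) h
  have hcross : ∀ n m, (f n).C ∩ (f m).Q = ∅ := by
    intro n m
    rcases le_total n m with h | h
    · exact Set.eq_empty_of_subset_empty
        ((f m).hCQ ▸ Set.inter_subset_inter_left _ (hCmono h))
    · rcases Nat.exists_eq_add_of_le h with ⟨k, rfl⟩
      cases k with
      | zero => exact (f m).hCQ ▸ (by simp)
      | succ k =>
        have h1 : (f m).Q ⊆ (f (m + k)).Q := hQmono (Nat.le_add_right _ _)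
        have h2 : (f (m + k + 1)).C ∩ (f (m + k)).Q = ∅ := (hstep (m + k)).2.2.1
        have : m + (k + 1) = m + k + 1 := rfl
        rw [this]
        exact Set.eq_empty_of_subset_empty
          (h2 ▸ Set.inter_subset_inter_right _ h1)
  refine ⟨(⋃ n, (f n).O) ∩ Y, (⋃ n, (f n).P) ∩ Y,
    ⟨⋃ n, (f n).O, isOpen_iUnion (fun n => (f n).hO), rfl⟩,
    ⟨⋃ n, (f n).P, isOpen_iUnion (fun n => (f n).hP), rfl⟩, ?_, ?_, ?_, ?_, ?_⟩
  · exact fun a ha => ⟨mem_iUnion.2 ⟨0, hs₀A ha⟩, hAY ha⟩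
  · exact fun b hb => ⟨mem_iUnion.2 ⟨0, hs₀B hb⟩, hBY hb⟩
  · rw [Set.eq_empty_iff_forall_notMem]
    rintro z ⟨⟨hzO', hzY⟩, ⟨hzP', _⟩⟩
    obtain ⟨n, hzO⟩ := mem_iUnion.1 hzO'
    obtain ⟨m, hzP⟩ := mem_iUnion.1 hzP'
    have h1 : z ∈ (f n).C := (f n).hOC ⟨hzO, hzY⟩
    have h2 : z ∈ (f m).Q := (f m).hPQ ⟨hzP, hzY⟩
    have := hcross n m
    exact absurd (Set.mem_inter h1 h2) (by rw [this]; exact notMem_empty z)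
  · rintro x y ⟨hxO, hxY⟩ hyY hxy
    obtain ⟨n, hn⟩ := mem_iUnion.1 hxO
    have : y ∈ (f n).C := (f n).hCfut ((f n).hOC ⟨hn, hxY⟩) hyY hxy
    exact ⟨mem_iUnion.2 ⟨n + 1, (hstep n).1 this⟩, hyY⟩
  · rintro x y ⟨hxP, hxY⟩ hyY hxy
    obtain ⟨n, hn⟩ := mem_iUnion.1 hxP
    have : y ∈ (f n).Q := (f n).hQfut ((f n).hPQ ⟨hn, hxY⟩) hyY hxy
    exact ⟨mem_iUnion.2 ⟨n + 1, (hstep n).2.1 this⟩, hyY⟩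


lemma relFutC_fut_inter (hD : IsPre D) {S : Set X} :
    relFutC D Y (fut D S ∩ Y) := by
  rintro x y ⟨⟨w, hw, hwx⟩, _⟩ hyY hxy
  exact ⟨⟨w, hw, hD.trans hwx hxy⟩, hyY⟩

lemma relFutC.diff (h : relFutC D Y A) : relFutC (transp D) Y (Y \ A) :=
  fun x y hx hy hxy => ⟨hy, fun hyA => hx.2 (h hyA hx.1 hxy)⟩

lemma strong_compact_normality (hD : IsPre D) (hY : IsCompact Y) (hA : IsClosed A)
    (hAY : A ⊆ Y) (hArel : relFutC D Y A) (hB : IsClosed B) (hBY : B ⊆ Y)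
    (hBrel : relFutC (transp D) Y B) (hAB : A ∩ B = ∅) :
    ∃ U V C Q : Set X,
      (∃ O, IsOpen O ∧ U = O ∩ Y) ∧ (∃ P, IsOpen P ∧ V = P ∩ Y) ∧
      A ⊆ U ∧ B ⊆ V ∧ relFutC D Y U ∧ relFutC (transp D) Y V ∧
      IsClosed C ∧ C ⊆ Y ∧ relFutC D Y C ∧ IsClosed Q ∧ Q ⊆ Y ∧
      relFutC (transp D) Y Q ∧ U ⊆ C ∧ V ⊆ Q ∧ C ∩ Q = ∅ ∧ C ∩ B = ∅ ∧ Q ∩ A = ∅ := by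
  -- first separation
  obtain ⟨U₀, V₀, ⟨O₀, hO₀, rfl⟩, ⟨P₀, hP₀, rfl⟩, hAU₀, hBV₀, hUV₀, hU₀fut, hV₀fut⟩ :=
    compact_normality hD hY hA hAY hArel hB hBY hBrel hAB
  -- second: separate A from Y \ U₀
  have hd2 : A ∩ (Y \ (O₀ ∩ Y)) = ∅ := by
    rw [Set.eq_empty_iff_forall_notMem]; rintro z ⟨hzA, _, hz2⟩; exact hz2 (hAU₀ hzA)
  have hd2' : A ∩ (Y \ O₀) = ∅ := by
    rw [Set.eq_empty_iff_forall_notMem]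
    rintro z ⟨hzA, hzY, hz2⟩; exact hz2 (hAU₀ hzA).1
  have hrel2 : relFutC (transp D) Y (Y \ O₀) := by
    rintro x y ⟨hxY, hxO⟩ hyY hxy
    refine ⟨hyY, fun hyO => hxO (hU₀fut ⟨hyO, hyY⟩ hxY hxy).1⟩
  obtain ⟨U, Vx, ⟨O, hO, rfl⟩, ⟨Px, hPx, rfl⟩, hAU, hBVx, hUVx, hUfut, hVxfut⟩ :=
    compact_normality hD hY hA hAY hArel (hY.isClosed.sdiff hO₀) diff_subset hrel2 hd2'
  -- third: separate B from Y \ V₀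
  have hd3 : B ∩ (Y \ (P₀ ∩ Y)) = ∅ := by
    rw [Set.eq_empty_iff_forall_notMem]; rintro z ⟨hzB, _, hz2⟩; exact hz2 (hBV₀ hzB)
  have hd3' : B ∩ (Y \ P₀) = ∅ := by
    rw [Set.eq_empty_iff_forall_notMem]
    rintro z ⟨hzB, hzY, hz2⟩; exact hz2 (hBV₀ hzB).1
  have hrel3 : relFutC (transp (transp D)) Y (Y \ P₀) := by
    rintro x y ⟨hxY, hxP⟩ hyY hxy
    refine ⟨hyY, fun hyP => hxP (hV₀fut ⟨hyP, hyY⟩ hxY hxy).1⟩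
  obtain ⟨V, Ux, ⟨P, hP, rfl⟩, ⟨Qx, hQx, rfl⟩, hBV, hAUx, hVUx, hVfut, hUxfut⟩ :=
    compact_normality hD.transp hY hB hBY hBrel (hY.isClosed.sdiff hP₀) diff_subset hrel3 hd3'
  -- closure control
  have hclUY : closure (O ∩ Y) ⊆ Y := hY.isClosed.closure_subset_iff.2 inter_subset_right
  have hclVY : closure (P ∩ Y) ⊆ Y := hY.isClosed.closure_subset_iff.2 inter_subset_right
  have hclUcpt : IsCompact (closure (O ∩ Y)) := hY.of_isClosed_subset isClosed_closure hclUY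
  have hclVcpt : IsCompact (closure (P ∩ Y)) := hY.of_isClosed_subset isClosed_closure hclVY
  have hclUU₀ : closure (O ∩ Y) ⊆ O₀ ∩ Y := by
    intro z hz
    have hzY : z ∈ Y := hclUY hz
    by_contra hzn
    have hzVx : z ∈ Px ∩ Y := hBVx ⟨hzY, fun h => hzn ⟨h, hzY⟩⟩
    obtain ⟨u, huPx, huU⟩ := mem_closure_iff.1 hz Px hPx hzVx.1
    exact absurd (Set.mem_inter huU (Set.mem_inter huPx huU.2))
      (by rw [hUVx]; exact notMem_empty u)
  have hclVV₀ : closure (P ∩ Y) ⊆ P₀ ∩ Y := by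
    intro z hz
    have hzY : z ∈ Y := hclVY hz
    by_contra hzn
    have hzUx : z ∈ Qx ∩ Y := hAUx ⟨hzY, fun h => hzn ⟨h, hzY⟩⟩
    obtain ⟨u, huQx, huV⟩ := mem_closure_iff.1 hz Qx hQx hzUx.1
    exact absurd (Set.mem_inter huV (Set.mem_inter huQx huV.2))
      (by rw [hVUx]; exact notMem_empty u)
  -- the closed saturations
  refine ⟨O ∩ Y, P ∩ Y, fut D (closure (O ∩ Y)) ∩ Y, fut (transp D) (closure (P ∩ Y)) ∩ Y,
    ⟨O, hO, rfl⟩, ⟨P, hP, rfl⟩, hAU, hBV, hUfut, hVfut,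
    (isClosed_fut hD.closed hclUcpt).inter hY.isClosed, inter_subset_right,
    relFutC_fut_inter hD,
    (isClosed_fut hD.transp.closed hclVcpt).inter hY.isClosed, inter_subset_right,
    relFutC_fut_inter hD.transp, ?_, ?_, ?_, ?_, ?_⟩
  · exact fun x hx => ⟨⟨x, subset_closure hx, hD.refl x⟩, hx.2⟩
  · exact fun x hx => ⟨⟨x, subset_closure hx, hD.refl x⟩, hx.2⟩
  · -- C ∩ Q = ∅ via U₀ ∩ V₀ = ∅
    rw [Set.eq_empty_iff_forall_notMem]
    rintro z ⟨⟨⟨x, hxcl, hxz⟩, hzY⟩, ⟨⟨w, hwcl, hwz⟩, _⟩⟩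
    have hz1 : z ∈ O₀ ∩ Y := hU₀fut (hclUU₀ hxcl) hzY hxz
    have hz2 : z ∈ P₀ ∩ Y := hV₀fut (hclVV₀ hwcl) hzY hwz
    exact absurd (Set.mem_inter hz1 hz2) (by rw [hUV₀]; exact notMem_empty z)
  · -- C ∩ B = ∅
    rw [Set.eq_empty_iff_forall_notMem]
    rintro z ⟨⟨⟨x, hxcl, hxz⟩, hzY⟩, hzB⟩
    have hz1 : z ∈ O₀ ∩ Y := hU₀fut (hclUU₀ hxcl) hzY hxz
    exact absurd (Set.mem_inter hz1 (hBV₀ hzB)) (by rw [hUV₀]; exact notMem_empty z)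
  · -- Q ∩ A = ∅
    rw [Set.eq_empty_iff_forall_notMem]
    rintro z ⟨⟨⟨x, hxcl, hxz⟩, hzY⟩, hzA⟩
    have hz2 : z ∈ P₀ ∩ Y := hV₀fut (hclVV₀ hxcl) hzY hxz
    exact absurd (Set.mem_inter (hAU₀ hzA) hz2) (by rw [hUV₀]; exact notMem_empty z)


structure GState (D : Set (X × X)) (A B Y : Set X) where
  O : Set X
  P : Set X
  C : Set X
  Q : Set X
  hO : IsOpen O
  hP : IsOpen P
  hC : IsClosed C
  hCY : C ⊆ Y
  hCfut : relFutC D Y C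
  hQ : IsClosed Q
  hQY : Q ⊆ Y
  hQfut : relFutC (transp D) Y Q
  hUC : O ∩ Y ⊆ C
  hVQ : P ∩ Y ⊆ Q
  hCQ : C ∩ Q = ∅
  hCB : C ∩ B = ∅
  hQA : Q ∩ A = ∅
  hAU : A ∩ Y ⊆ O ∩ Y
  hBV : B ∩ Y ⊆ P ∩ Y

variable {D : Set (X × X)} {A B : Set X}

lemma not_mem_of_eq_empty {s t : Set X} (h : s ∩ t = ∅) {z : X} (hz1 : z ∈ s)
    (hz2 : z ∈ t) : False := by
  exact absurd (Set.mem_inter hz1 hz2) (by rw [h]; exact notMem_empty z)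

lemma exists_gstate_base (hD : IsPre D) (hA : IsClosed A) (hAfut : futC D A)
    (hB : IsClosed B) (hBfut : futC (transp D) B) (hAB : A ∩ B = ∅)
    {Y : Set X} (hY : IsCompact Y) :
    Nonempty (GState D A B Y) := by
  obtain ⟨U, V, C, Q, ⟨O, hO, rfl⟩, ⟨P, hP, rfl⟩, hAU, hBV, hUfut, hVfut, hC, hCY, hCfut,
      hQ, hQY, hQfut, hUC, hVQ, hCQ, hCB', hQA'⟩ :=
    strong_compact_normality hD hY (hA.inter hY.isClosed) inter_subset_right
      (fun x y hx hy hxy => ⟨hAfut hx.1 hxy, hy⟩)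
      (hB.inter hY.isClosed) inter_subset_right
      (fun x y hx hy hxy => ⟨hBfut hx.1 hxy, hy⟩)
      (by rw [Set.eq_empty_iff_forall_notMem]
          rintro z ⟨⟨h1, _⟩, ⟨h2, _⟩⟩
          exact not_mem_of_eq_empty hAB h1 h2)
  refine ⟨⟨O, P, C, Q, hO, hP, hC, hCY, hCfut, hQ, hQY, hQfut, hUC, hVQ, hCQ, ?_, ?_,
      hAU, hBV⟩⟩
  · rw [Set.eq_empty_iff_forall_notMem]
    rintro z ⟨hzC, hzB⟩
    exact not_mem_of_eq_empty hCB' hzC ⟨hzB, hCY hzC⟩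
  · rw [Set.eq_empty_iff_forall_notMem]
    rintro z ⟨hzQ, hzA⟩
    exact not_mem_of_eq_empty hQA' hzQ ⟨hzA, hQY hzQ⟩

lemma exists_gstate_step (hD : IsPre D) (hA : IsClosed A) (hAfut : futC D A)
    (hB : IsClosed B) (hBfut : futC (transp D) B) (hAB : A ∩ B = ∅)
    {Y Y' : Set X} (hY : IsCompact Y) (hY' : IsCompact Y') (hYY' : Y ⊆ Y')
    (s : GState D A B Y) :
    ∃ s' : GState D A B Y', (fut D s.C ∩ Y') ⊆ s'.O ∩ Y' ∧
      (fut (transp D) s.Q ∩ Y') ⊆ s'.P ∩ Y' ∧ s.C ⊆ s'.C ∧ s.Q ⊆ s'.Q ∧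
      s.C ⊆ s'.O ∩ Y' ∧ s.Q ⊆ s'.P ∩ Y' := by
  have hCcpt : IsCompact s.C := hY.of_isClosed_subset s.hC s.hCY
  have hQcpt : IsCompact s.Q := hY.of_isClosed_subset s.hQ s.hQY
  set A' := (A ∩ Y') ∪ (fut D s.C ∩ Y') with hA'def
  set B' := (B ∩ Y') ∪ (fut (transp D) s.Q ∩ Y') with hB'def
  have hA' : IsClosed A' := ((hA.inter hY'.isClosed).union
    ((isClosed_fut hD.closed hCcpt).inter hY'.isClosed))
  have hB' : IsClosed B' := ((hB.inter hY'.isClosed).union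
    ((isClosed_fut hD.transp.closed hQcpt).inter hY'.isClosed))
  have hA'Y : A' ⊆ Y' := union_subset inter_subset_right inter_subset_right
  have hB'Y : B' ⊆ Y' := union_subset inter_subset_right inter_subset_right
  have hA'rel : relFutC D Y' A' := by
    rintro x y (⟨hxA, _⟩ | ⟨⟨w, hw, hwx⟩, _⟩) hy hxy
    · exact Or.inl ⟨hAfut hxA hxy, hy⟩
    · exact Or.inr ⟨⟨w, hw, hD.trans hwx hxy⟩, hy⟩
  have hB'rel : relFutC (transp D) Y' B' := by
    rintro x y (⟨hxB, _⟩ | ⟨⟨w, hw, hwx⟩, _⟩) hy hxy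
    · exact Or.inl ⟨hBfut hxB hxy, hy⟩
    · exact Or.inr ⟨⟨w, hw, hD.transp.trans hwx hxy⟩, hy⟩
  have hA'B' : A' ∩ B' = ∅ := by
    rw [Set.eq_empty_iff_forall_notMem]
    rintro z ⟨(⟨hzA, _⟩ | ⟨⟨w, hw, hwz⟩, _⟩), (⟨hzB, _⟩ | ⟨⟨v, hv, hvz⟩, _⟩)⟩
    · exact not_mem_of_eq_empty hAB hzA hzB
    · -- z ∈ A and (z,v) ∈ D with v ∈ s.Q : then v ∈ A, contradicting hQA
      exact not_mem_of_eq_empty s.hQA hv (hAfut hzA hvz)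
    · -- w ∈ s.C, (w,z) ∈ D, z ∈ B: w ∈ B by past-closedness
      exact not_mem_of_eq_empty s.hCB hw (hBfut hzB hwz)
    · -- w ∈ s.C ≤ z ≤ v ∈ s.Q
      have hwv : (w, v) ∈ D := hD.trans hwz hvz
      have : v ∈ s.C := s.hCfut hw (s.hQY hv) hwv
      exact not_mem_of_eq_empty s.hCQ this hv
  obtain ⟨U, V, C', Q', ⟨O, hO, rfl⟩, ⟨P, hP, rfl⟩, hAU, hBV, hUfut, hVfut, hC', hC'Y,
      hC'fut, hQ', hQ'Y, hQ'fut, hUC', hVQ', hC'Q', hC'B', hQ'A'⟩ :=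
    strong_compact_normality hD hY' hA' hA'Y hA'rel hB' hB'Y hB'rel hA'B'
  have hCA' : s.C ⊆ A' := fun x hx =>
    Or.inr ⟨⟨x, hx, hD.refl x⟩, hYY' (s.hCY hx)⟩
  have hQB' : s.Q ⊆ B' := fun x hx =>
    Or.inr ⟨⟨x, hx, hD.refl x⟩, hYY' (s.hQY hx)⟩
  refine ⟨⟨O, P, C', Q', hO, hP, hC', hC'Y, hC'fut, hQ', hQ'Y, hQ'fut, hUC', hVQ',
      hC'Q', ?_, ?_, fun z hz => hAU (Or.inl hz), fun z hz => hBV (Or.inl hz)⟩,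
    fun z hz => hAU (Or.inr hz), fun z hz => hBV (Or.inr hz),
    fun z hz => hUC' (hAU (hCA' hz)), fun z hz => hVQ' (hBV (hQB' hz)),
    fun z hz => hAU (hCA' hz), fun z hz => hBV (hQB' hz)⟩
  · rw [Set.eq_empty_iff_forall_notMem]
    rintro z ⟨hzC, hzB⟩
    exact not_mem_of_eq_empty hC'B' hzC (Or.inl ⟨hzB, hC'Y hzC⟩)
  · rw [Set.eq_empty_iff_forall_notMem]
    rintro z ⟨hzQ, hzA⟩
    exact not_mem_of_eq_empty hQ'A' hzQ (Or.inl ⟨hzA, hQ'Y hzQ⟩)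

theorem global_normality [LocallyCompactSpace X] [SigmaCompactSpace X]
    (hD : IsPre D) (hA : IsClosed A) (hAfut : futC D A)
    (hB : IsClosed B) (hBfut : futC (transp D) B) (hAB : A ∩ B = ∅) :
    ∃ U V : Set X, IsOpen U ∧ IsOpen V ∧ A ⊆ U ∧ B ⊆ V ∧ U ∩ V = ∅ ∧
      futC D U ∧ futC (transp D) V := by
  let K : CompactExhaustion X := CompactExhaustion.choice X
  obtain ⟨s₀⟩ := exists_gstate_base hD hA hAfut hB hBfut hAB (K.isCompact 0)
  let seq : ∀ n : ℕ, GState D A B (K n) := fun n =>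
    Nat.rec s₀ (fun n s => Classical.choose
      (exists_gstate_step hD hA hAfut hB hBfut hAB (K.isCompact n) (K.isCompact (n+1))
        (K.subset_succ n) s)) n
  have hspec : ∀ n, (fut D (seq n).C ∩ K (n+1)) ⊆ (seq (n+1)).O ∩ K (n+1) ∧
      (fut (transp D) (seq n).Q ∩ K (n+1)) ⊆ (seq (n+1)).P ∩ K (n+1) ∧
      (seq n).C ⊆ (seq (n+1)).C ∧ (seq n).Q ⊆ (seq (n+1)).Q ∧
      (seq n).C ⊆ (seq (n+1)).O ∩ K (n+1) ∧ (seq n).Q ⊆ (seq (n+1)).P ∩ K (n+1) :=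
    fun n => Classical.choose_spec
      (exists_gstate_step hD hA hAfut hB hBfut hAB (K.isCompact n) (K.isCompact (n+1))
        (K.subset_succ n) (seq n))
  have hCmono : ∀ ⦃n m : ℕ⦄, n ≤ m → (seq n).C ⊆ (seq m).C :=
    fun n m h => monotone_nat_of_le_succ (fun k => (hspec k).2.2.1) h
  have hQmono : ∀ ⦃n m : ℕ⦄, n ≤ m → (seq n).Q ⊆ (seq m).Q :=
    fun n m h => monotone_nat_of_le_succ (fun k => (hspec k).2.2.2.1) h
  have hUmono : ∀ ⦃n m : ℕ⦄, n ≤ m → (seq n).O ∩ K n ⊆ (seq m).O ∩ K m :=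
    fun n m h => monotone_nat_of_le_succ
      (f := fun k => (seq k).O ∩ K k)
      (fun k z hz => (hspec k).2.2.2.2.1 ((seq k).hUC hz)) h
  have hVmono : ∀ ⦃n m : ℕ⦄, n ≤ m → (seq n).P ∩ K n ⊆ (seq m).P ∩ K m :=
    fun n m h => monotone_nat_of_le_succ
      (f := fun k => (seq k).P ∩ K k)
      (fun k z hz => (hspec k).2.2.2.2.2 ((seq k).hVQ hz)) h
  refine ⟨⋃ n, ((seq n).O ∩ K n), ⋃ n, ((seq n).P ∩ K n), ?_, ?_, ?_, ?_, ?_, ?_, ?_⟩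
  · rw [isOpen_iff_forall_mem_open]
    intro x hx
    obtain ⟨n, hn⟩ := mem_iUnion.1 hx
    refine ⟨(seq (n+1)).O ∩ interior (K (n+1)), ?_, (seq (n+1)).hO.inter isOpen_interior, ?_⟩
    · intro z hz
      exact mem_iUnion.2 ⟨n+1, ⟨hz.1, interior_subset hz.2⟩⟩
    · have hx' : x ∈ (seq (n+1)).O ∩ K (n+1) := hUmono (Nat.le_succ n) hn
      exact ⟨hx'.1, K.subset_interior_succ n hn.2⟩
  · rw [isOpen_iff_forall_mem_open]
    intro x hx
    obtain ⟨n, hn⟩ := mem_iUnion.1 hx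
    refine ⟨(seq (n+1)).P ∩ interior (K (n+1)), ?_, (seq (n+1)).hP.inter isOpen_interior, ?_⟩
    · intro z hz
      exact mem_iUnion.2 ⟨n+1, ⟨hz.1, interior_subset hz.2⟩⟩
    · have hx' : x ∈ (seq (n+1)).P ∩ K (n+1) := hVmono (Nat.le_succ n) hn
      exact ⟨hx'.1, K.subset_interior_succ n hn.2⟩
  · intro a ha
    obtain ⟨n, hn⟩ := K.exists_mem a
    exact mem_iUnion.2 ⟨n, (seq n).hAU ⟨ha, hn⟩⟩
  · intro b hb
    obtain ⟨n, hn⟩ := K.exists_mem b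
    exact mem_iUnion.2 ⟨n, (seq n).hBV ⟨hb, hn⟩⟩
  · rw [Set.eq_empty_iff_forall_notMem]
    rintro z ⟨hz1, hz2⟩
    obtain ⟨n, hn⟩ := mem_iUnion.1 hz1
    obtain ⟨m, hm⟩ := mem_iUnion.1 hz2
    have h1 : z ∈ (seq (max n m)).C := (seq _).hUC (hUmono (le_max_left n m) hn)
    have h2 : z ∈ (seq (max n m)).Q := (seq _).hVQ (hVmono (le_max_right n m) hm)
    exact not_mem_of_eq_empty (seq (max n m)).hCQ h1 h2
  · intro x y hx hxy
    obtain ⟨n, hn⟩ := mem_iUnion.1 hx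
    obtain ⟨m₀, hm₀⟩ := K.exists_mem y
    have hxC : x ∈ (seq (max n m₀)).C := (seq _).hUC (hUmono (le_max_left n m₀) hn)
    have hy : y ∈ fut D (seq (max n m₀)).C ∩ K (max n m₀ + 1) :=
      ⟨⟨x, hxC, hxy⟩, K.subset (Nat.le_succ_of_le (le_max_right n m₀)) hm₀⟩
    exact mem_iUnion.2 ⟨max n m₀ + 1, (hspec (max n m₀)).1 hy⟩
  · intro x y hx hxy
    obtain ⟨n, hn⟩ := mem_iUnion.1 hx
    obtain ⟨m₀, hm₀⟩ := K.exists_mem y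
    have hxQ : x ∈ (seq (max n m₀)).Q := (seq _).hVQ (hVmono (le_max_left n m₀) hn)
    have hy : y ∈ fut (transp D) (seq (max n m₀)).Q ∩ K (max n m₀ + 1) :=
      ⟨⟨x, hxQ, hxy⟩, K.subset (Nat.le_succ_of_le (le_max_right n m₀)) hm₀⟩
    exact mem_iUnion.2 ⟨max n m₀ + 1, (hspec (max n m₀)).2.1 hy⟩


/-- A good pair: closed future set, closed past set, disjoint, containing A resp. B. -/
def GoodPair (D : Set (X × X)) (A B Cf Pp : Set X) : Prop :=
  IsClosed Cf ∧ futC D Cf ∧ IsClosed Pp ∧ futC (transp D) Pp ∧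
    A ⊆ Cf ∧ B ⊆ Pp ∧ Cf ∩ Pp = ∅

def SepProps (D : Set (X × X)) (cp uv : Set X × Set X) : Prop :=
  IsOpen uv.1 ∧ IsOpen uv.2 ∧ cp.1 ⊆ uv.1 ∧ cp.2 ⊆ uv.2 ∧ uv.1 ∩ uv.2 = ∅ ∧
    futC D uv.1 ∧ futC (transp D) uv.2

variable (D : Set (X × X)) (A B : Set X)

abbrev GP := {cp : Set X × Set X // GoodPair D A B cp.1 cp.2}

variable (sep : ∀ cp : GP D A B, {uv : Set X × Set X // SepProps D cp.1 uv})

/-- one refinement step -/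
noncomputable def gapStep (b : Bool) (g : GP D A B) : GP D A B :=
  match b with
  | true => ⟨((sep g).1.2ᶜ, g.1.2), by
      obtain ⟨hU, hV, hCU, hPV, hUV, hUfut, hVfut⟩ := (sep g).2
      obtain ⟨hCf, hCffut, hPp, hPpfut, hACf, hBPp, hdisj⟩ := g.2
      refine ⟨hV.isClosed_compl, ?_, hPp, hPpfut, ?_, hBPp, ?_⟩
      · intro x y hx hxy hyV
        exact hx (hVfut hyV hxy)
      · intro a ha hV'
        exact absurd (Set.mem_inter (hCU (hACf ha)) hV')
          (by rw [hUV]; exact notMem_empty a)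
      · rw [Set.eq_empty_iff_forall_notMem]
        rintro z ⟨hz1, hz2⟩
        exact hz1 (hPV hz2)⟩
  | false => ⟨(g.1.1, (sep g).1.1ᶜ), by
      obtain ⟨hU, hV, hCU, hPV, hUV, hUfut, hVfut⟩ := (sep g).2
      obtain ⟨hCf, hCffut, hPp, hPpfut, hACf, hBPp, hdisj⟩ := g.2
      refine ⟨hCf, hCffut, hU.isClosed_compl, ?_, hACf, ?_, ?_⟩
      · intro x y hx hxy hyU
        exact hx (hUfut hyU hxy)
      · intro b hb hU'
        exact absurd (Set.mem_inter hU' (hPV (hBPp hb)))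
          (by rw [hUV]; exact notMem_empty b)
      · rw [Set.eq_empty_iff_forall_notMem]
        rintro z ⟨hz1, hz2⟩
        exact hz2 (hCU hz1)⟩

variable (hbase : GoodPair D A B A B)

/-- the dyadic tree of good pairs; the head of the list is the deepest refinement. -/
noncomputable def gap : List Bool → GP D A B
  | [] => ⟨(A, B), hbase⟩
  | b :: s => gapStep D A B sep b (gap s)

/-- the open sets attached to each node -/
noncomputable def Unode (s : List Bool) : Set X := (sep (gap D A B sep hbase s)).1.1
noncomputable def Vnode (s : List Bool) : Set X := (sep (gap D A B sep hbase s)).1.2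
/-- closed "value-level" set -/
noncomputable def Cnode (s : List Bool) : Set X := (Vnode D A B sep hbase s)ᶜ





variable {X : Type*} [MetricSpace X]
variable (D : Set (X × X)) (A B : Set X)
variable (sep : ∀ cp : GP D A B, {uv : Set X × Set X // SepProps D cp.1 uv})
variable (hbase : GoodPair D A B A B)

lemma gap_true_fst (s : List Bool) :
    (gap D A B sep hbase (true :: s)).1.1 = Cnode D A B sep hbase s := rfl
lemma gap_true_snd (s : List Bool) :
    (gap D A B sep hbase (true :: s)).1.2 = (gap D A B sep hbase s).1.2 := rfl
lemma gap_false_fst (s : List Bool) :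
    (gap D A B sep hbase (false :: s)).1.1 = (gap D A B sep hbase s).1.1 := rfl
lemma gap_false_snd (s : List Bool) :
    (gap D A B sep hbase (false :: s)).1.2 = (Unode D A B sep hbase s)ᶜ := rfl

lemma U_open (s : List Bool) : IsOpen (Unode D A B sep hbase s) :=
  (sep (gap D A B sep hbase s)).2.1
lemma V_open (s : List Bool) : IsOpen (Vnode D A B sep hbase s) :=
  (sep (gap D A B sep hbase s)).2.2.1
lemma Cf_sub_U (s : List Bool) :
    (gap D A B sep hbase s).1.1 ⊆ Unode D A B sep hbase s :=
  (sep (gap D A B sep hbase s)).2.2.2.1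
lemma Pp_sub_V (s : List Bool) :
    (gap D A B sep hbase s).1.2 ⊆ Vnode D A B sep hbase s :=
  (sep (gap D A B sep hbase s)).2.2.2.2.1
lemma UV_disj (s : List Bool) :
    Unode D A B sep hbase s ∩ Vnode D A B sep hbase s = ∅ :=
  (sep (gap D A B sep hbase s)).2.2.2.2.2.1
lemma U_futC (s : List Bool) : futC D (Unode D A B sep hbase s) :=
  (sep (gap D A B sep hbase s)).2.2.2.2.2.2.1
lemma V_futC (s : List Bool) : futC (transp D) (Vnode D A B sep hbase s) :=
  (sep (gap D A B sep hbase s)).2.2.2.2.2.2.2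
lemma A_sub_Cf (s : List Bool) : A ⊆ (gap D A B sep hbase s).1.1 :=
  (gap D A B sep hbase s).2.2.2.2.2.1
lemma B_sub_Pp (s : List Bool) : B ⊆ (gap D A B sep hbase s).1.2 :=
  (gap D A B sep hbase s).2.2.2.2.2.2.1

lemma A_sub_U (s : List Bool) : A ⊆ Unode D A B sep hbase s :=
  fun a ha => Cf_sub_U D A B sep hbase s (A_sub_Cf D A B sep hbase s ha)

lemma U_disj_B (s : List Bool) {b : X} (hb : b ∈ B) : b ∉ Unode D A B sep hbase s := by
  intro hU
  have hV : b ∈ Vnode D A B sep hbase s :=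
    Pp_sub_V D A B sep hbase s (B_sub_Pp D A B sep hbase s hb)
  exact absurd (Set.mem_inter hU hV)
    (by rw [UV_disj D A B sep hbase s]; exact notMem_empty b)

lemma U_sub_C (s : List Bool) :
    Unode D A B sep hbase s ⊆ Cnode D A B sep hbase s := by
  intro x hx hV
  exact absurd (Set.mem_inter hx hV)
    (by rw [UV_disj D A B sep hbase s]; exact notMem_empty x)

lemma gap_mono (r s : List Bool) :
    (gap D A B sep hbase s).1.1 ⊆ (gap D A B sep hbase (r ++ s)).1.1 ∧
    (gap D A B sep hbase s).1.2 ⊆ (gap D A B sep hbase (r ++ s)).1.2 := by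
  induction r with
  | nil => exact ⟨subset_rfl, subset_rfl⟩
  | cons b r ih =>
    have hco : (b :: r) ++ s = b :: (r ++ s) := rfl
    rw [hco]
    cases b
    · rw [gap_false_fst, gap_false_snd]
      refine ⟨ih.1, ih.2.trans ?_⟩
      intro x hx hU
      have hV := Pp_sub_V D A B sep hbase (r ++ s) hx
      exact absurd (Set.mem_inter hU hV)
        (by rw [UV_disj D A B sep hbase (r ++ s)]; exact notMem_empty x)
    · rw [gap_true_fst, gap_true_snd]
      refine ⟨ih.1.trans ?_, ih.2⟩
      intro x hx
      exact U_sub_C D A B sep hbase (r ++ s) (Cf_sub_U D A B sep hbase (r ++ s) hx)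

lemma OL_left (r s : List Bool) :
    Cnode D A B sep hbase (r ++ (false :: s)) ⊆ Unode D A B sep hbase s := by
  intro x hx
  by_contra hU
  have h1 : x ∈ (gap D A B sep hbase (false :: s)).1.2 := by
    rw [gap_false_snd]; exact hU
  have h2 := (gap_mono D A B sep hbase r (false :: s)).2 h1
  exact hx (Pp_sub_V D A B sep hbase (r ++ (false :: s)) h2)

lemma OL_right (r s : List Bool) :
    Cnode D A B sep hbase s ⊆ Unode D A B sep hbase (r ++ (true :: s)) := by
  intro x hx
  have h1 : x ∈ (gap D A B sep hbase (true :: s)).1.1 := by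
    rw [gap_true_fst]; exact hx
  have h2 := (gap_mono D A B sep hbase r (true :: s)).1 h1
  exact Cf_sub_U D A B sep hbase (r ++ (true :: s)) h2





/-- dyadic intervals attached to tree nodes -/
noncomputable def iv : List Bool → ℝ × ℝ
  | [] => (0, 1)
  | true :: s => (((iv s).1 + (iv s).2) / 2, (iv s).2)
  | false :: s => ((iv s).1, ((iv s).1 + (iv s).2) / 2)

noncomputable def lov (s : List Bool) : ℝ := (iv s).1
noncomputable def hiv (s : List Bool) : ℝ := (iv s).2
noncomputable def vv (s : List Bool) : ℝ := (lov s + hiv s) / 2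

lemma iv_true (s : List Bool) : iv (true :: s) = ((lov s + hiv s) / 2, hiv s) := rfl
lemma iv_false (s : List Bool) : iv (false :: s) = (lov s, (lov s + hiv s) / 2) := rfl

lemma lov_true (s : List Bool) : lov (true :: s) = vv s := rfl
lemma hiv_true (s : List Bool) : hiv (true :: s) = hiv s := rfl
lemma lov_false (s : List Bool) : lov (false :: s) = lov s := rfl
lemma hiv_false (s : List Bool) : hiv (false :: s) = vv s := rfl

lemma width_eq (s : List Bool) : hiv s - lov s = (1 / 2) ^ s.length := by
  induction s with
  | nil => simp [lov, hiv, iv]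
  | cons b s ih =>
    cases b
    · rw [List.length_cons, hiv_false, lov_false, vv]; rw [pow_succ]; linarith
    · rw [List.length_cons, hiv_true, lov_true, vv]; rw [pow_succ]; linarith

lemma lov_lt_hiv (s : List Bool) : lov s < hiv s := by
  have := width_eq s
  have h2 : (0:ℝ) < (1 / 2) ^ s.length := by positivity
  linarith

lemma lov_lt_vv (s : List Bool) : lov s < vv s := by
  have := lov_lt_hiv s; rw [vv]; linarith

lemma vv_lt_hiv (s : List Bool) : vv s < hiv s := by
  have := lov_lt_hiv s; rw [vv]; linarith

lemma lov_nonneg (s : List Bool) : 0 ≤ lov s ∧ hiv s ≤ 1 := by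
  induction s with
  | nil => simp [lov, hiv, iv]
  | cons b s ih =>
    have := lov_lt_hiv s
    cases b
    · rw [lov_false, hiv_false, vv]; constructor <;> [exact ih.1; linarith [ih.2]]
    · rw [lov_true, hiv_true, vv]; constructor <;> [linarith [ih.1]; exact ih.2]

lemma vv_pos (s : List Bool) : 0 < vv s :=
  lt_of_le_of_lt (lov_nonneg s).1 (lov_lt_vv s)

lemma vv_lt_one (s : List Bool) : vv s < 1 :=
  lt_of_lt_of_le (vv_lt_hiv s) (lov_nonneg s).2

lemma iv_mono (r s : List Bool) : lov s ≤ lov (r ++ s) ∧ hiv (r ++ s) ≤ hiv s := by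
  induction r with
  | nil => exact ⟨le_rfl, le_rfl⟩
  | cons b r ih =>
    have h1 := lov_lt_hiv (r ++ s)
    have hco : (b :: r) ++ s = b :: (r ++ s) := rfl
    rw [hco]
    cases b
    · rw [lov_false, hiv_false, vv]
      exact ⟨ih.1, by linarith [ih.2]⟩
    · rw [lov_true, hiv_true, vv]
      exact ⟨by linarith [ih.1], ih.2⟩

lemma vv_right_gt (r s : List Bool) : vv s < vv (r ++ (true :: s)) := by
  have h1 := (iv_mono r (true :: s)).1
  rw [lov_true] at h1
  exact lt_of_le_of_lt h1 (lov_lt_vv _)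

lemma vv_left_lt (r s : List Bool) : vv (r ++ (false :: s)) < vv s := by
  have h1 := (iv_mono r (false :: s)).2
  rw [hiv_false] at h1
  exact lt_of_lt_of_le (vv_lt_hiv _) h1





variable {X : Type*} [MetricSpace X]
variable (D : Set (X × X)) (A B : Set X)
variable (sep : ∀ cp : GP D A B, {uv : Set X × Set X // SepProps D cp.1 uv})
variable (hbase : GoodPair D A B A B)

lemma append_last_cons {α : Type*} (r : List α) (b : α) (s : List α) :
    (r ++ [b]) ++ s = r ++ (b :: s) := by
  rw [List.append_assoc]; rfl

lemma key_lemma : ∀ (N : ℕ) (t u s : List Bool), t.length + u.length ≤ N →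
    vv (t ++ s) < vv (u ++ s) →
    Cnode D A B sep hbase (t ++ s) ⊆ Unode D A B sep hbase (u ++ s) := by
  intro N
  induction N with
  | zero =>
    intro t u s hlen hlt
    have ht : t = [] := List.length_eq_zero_iff.1 (Nat.le_zero.1 (le_trans (Nat.le_add_right _ _) hlen))
    have hu : u = [] := List.length_eq_zero_iff.1 (Nat.le_zero.1 (le_trans (Nat.le_add_left _ _) hlen))
    rw [ht, hu] at hlt
    exact absurd hlt (lt_irrefl _)
  | succ N ih =>
    intro t u s hlen hlt
    rcases eq_or_ne t [] with rfl | htne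
    · rcases eq_or_ne u [] with rfl | hune
      · exact absurd hlt (lt_irrefl _)
      · obtain ⟨u', b, rfl⟩ : ∃ u' b, u = u' ++ [b] :=
          ⟨u.dropLast, u.getLast hune, (List.dropLast_append_getLast hune).symm⟩
        rw [append_last_cons] at hlt ⊢
        cases b
        · exact absurd (lt_trans hlt (vv_left_lt u' s)) (lt_irrefl _)
        · exact OL_right D A B sep hbase u' s
    · obtain ⟨t', b₁, rfl⟩ : ∃ t' b₁, t = t' ++ [b₁] :=
        ⟨t.dropLast, t.getLast htne, (List.dropLast_append_getLast htne).symm⟩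
      rw [append_last_cons] at hlt ⊢
      rcases eq_or_ne u [] with rfl | hune
      · cases b₁
        · exact OL_left D A B sep hbase t' s
        · exact absurd (lt_trans (vv_right_gt t' s) hlt) (lt_irrefl _)
      · obtain ⟨u', b₂, rfl⟩ : ∃ u' b₂, u = u' ++ [b₂] :=
          ⟨u.dropLast, u.getLast hune, (List.dropLast_append_getLast hune).symm⟩
        rw [append_last_cons] at hlt ⊢
        have hlen' : t'.length + u'.length ≤ N := by
          have h1 : (t' ++ [b₁]).length = t'.length + 1 := by simp
          have h2 : (u' ++ [b₂]).length = u'.length + 1 := by simp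
          omega
        cases b₁ <;> cases b₂
        · -- both false: recurse into left subtree
          exact ih t' u' (false :: s) hlen' hlt
        · -- t left, u right
        -- Cnode (t'++(false::s)) ⊆ U s ⊆ Cnode s ⊆ U (u'++(true::s))
          refine (OL_left D A B sep hbase t' s).trans ?_
          refine (U_sub_C D A B sep hbase s).trans ?_
          exact OL_right D A B sep hbase u' s
        · -- t right, u left: values contradict
          exact absurd (lt_trans (vv_right_gt t' s) (lt_trans hlt (vv_left_lt u' s)))
            (lt_irrefl _)
        · exact ih t' u' (true :: s) hlen' hlt

lemma key' {t u : List Bool} (h : vv t < vv u) :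
    Cnode D A B sep hbase t ⊆ Unode D A B sep hbase u := by
  have := key_lemma D A B sep hbase (t.length + u.length) t u [] le_rfl
  rw [List.append_nil, List.append_nil] at this
  exact this h





lemma iv_rat : ∀ s : List Bool, ∃ q1 q2 : ℚ, lov s = (q1 : ℝ) ∧ hiv s = (q2 : ℝ) := by
  intro s
  induction s with
  | nil => exact ⟨0, 1, by simp [lov, iv], by simp [hiv, iv]⟩
  | cons b s ih =>
    obtain ⟨q1, q2, h1, h2⟩ := ih
    cases b
    · exact ⟨q1, (q1 + q2) / 2, by rw [lov_false, h1],
        by rw [hiv_false, vv, h1, h2]; push_cast; ring⟩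
    · exact ⟨(q1 + q2) / 2, q2, by rw [lov_true, vv, h1, h2]; push_cast; ring,
        by rw [hiv_true, h2]⟩

lemma vv_not_irrational (s : List Bool) : ¬Irrational (vv s) := by
  obtain ⟨q1, q2, h1, h2⟩ := iv_rat s
  rw [vv, h1, h2]
  intro h
  exact Rat.not_irrational ((q1 + q2) / 2) (by convert h using 2; push_cast; ring)

lemma descend (x : ℝ) (hx : ∀ t, vv t ≠ x) :
    ∀ (n : ℕ) (s : List Bool), lov s < x → x < hiv s →
    ∃ t, lov (t ++ s) < x ∧ x < hiv (t ++ s) ∧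
      hiv (t ++ s) - lov (t ++ s) = (hiv s - lov s) / 2 ^ n := by
  intro n
  induction n with
  | zero => intro s h1 h2; exact ⟨[], h1, h2, by simp⟩
  | succ n ih =>
    intro s h1 h2
    rcases lt_or_gt_of_ne (hx s).symm with hlt | hgt
    · -- x < vv s : go left
      obtain ⟨t, ht1, ht2, ht3⟩ := ih (false :: s) (by rwa [lov_false]) (by rwa [hiv_false])
      refine ⟨t ++ [false], ?_, ?_, ?_⟩
      · rwa [append_last_cons]
      · rwa [append_last_cons]
      · rw [append_last_cons, ht3, hiv_false, lov_false, vv]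
        field_simp
        ring
    · -- vv s < x : go right
      obtain ⟨t, ht1, ht2, ht3⟩ := ih (true :: s) (by rwa [lov_true]) (by rwa [hiv_true])
      refine ⟨t ++ [true], ?_, ?_, ?_⟩
      · rwa [append_last_cons]
      · rwa [append_last_cons]
      · rw [append_last_cons, ht3, hiv_true, lov_true, vv]
        field_simp
        ring

lemma exists_vv_between {α β : ℝ} (h0 : 0 ≤ α) (h1 : β ≤ 1) (hab : α < β) :
    ∃ s : List Bool, α < vv s ∧ vv s < β := by
  obtain ⟨x, hxirr, hαx, hxβ⟩ := exists_irrational_btwn hab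
  have hx : ∀ t, vv t ≠ x := fun t ht => vv_not_irrational t (ht ▸ hxirr)
  have hx0 : (0 : ℝ) < x := lt_of_le_of_lt h0 hαx
  have hx1 : x < 1 := lt_of_lt_of_le hxβ h1
  obtain ⟨n, hn⟩ := exists_pow_lt_of_lt_one (x := min (x - α) (β - x))
    (lt_min (by linarith) (by linarith)) (by norm_num : (1:ℝ)/2 < 1)
  obtain ⟨t, ht1, ht2, ht3⟩ := descend x hx n [] (by simpa [lov, iv] using hx0)
    (by simpa [hiv, iv] using hx1)
  rw [List.append_nil] at ht1 ht2 ht3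
  have hw : hiv t - lov t < min (x - α) (β - x) := by
    have : hiv [] - lov [] = 1 := by simp [lov, hiv, iv]
    calc hiv t - lov t = (hiv [] - lov []) / 2 ^ n := ht3
    _ = (1/2)^n := by rw [this]; rw [div_pow]; norm_num
    _ < _ := hn
  have hv1 := lov_lt_vv t
  have hv2 := vv_lt_hiv t
  have hm1 : min (x - α) (β - x) ≤ x - α := min_le_left _ _
  have hm2 : min (x - α) (β - x) ≤ β - x := min_le_right _ _
  exact ⟨t, by linarith, by linarith⟩





variable {X : Type*} [MetricSpace X]
variable (D : Set (X × X)) (A B : Set X)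
variable (sep : ∀ cp : GP D A B, {uv : Set X × Set X // SepProps D cp.1 uv})
variable (hbase : GoodPair D A B A B)

noncomputable def SS (x : X) : Set ℝ :=
  insert 1 {r | ∃ s, x ∈ Unode D A B sep hbase s ∧ vv s = r}

noncomputable def ff (x : X) : ℝ := sInf (SS D A B sep hbase x)

lemma SS_nonempty (x : X) : (SS D A B sep hbase x).Nonempty := ⟨1, mem_insert 1 _⟩

lemma SS_bdd (x : X) : ∀ r ∈ SS D A B sep hbase x, (0:ℝ) ≤ r := by
  rintro r (rfl | ⟨s, _, rfl⟩)
  · norm_num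
  · exact le_of_lt (vv_pos s)

lemma SS_bddBelow (x : X) : BddBelow (SS D A B sep hbase x) :=
  ⟨0, fun r hr => SS_bdd D A B sep hbase x r hr⟩

lemma ff_le_of_memU {x : X} {s : List Bool} (hx : x ∈ Unode D A B sep hbase s) :
    ff D A B sep hbase x ≤ vv s :=
  csInf_le (SS_bddBelow D A B sep hbase x) (Or.inr ⟨s, hx, rfl⟩)

lemma ff_le_one (x : X) : ff D A B sep hbase x ≤ 1 :=
  csInf_le (SS_bddBelow D A B sep hbase x) (mem_insert 1 _)

lemma ff_nonneg (x : X) : 0 ≤ ff D A B sep hbase x :=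
  le_csInf (SS_nonempty D A B sep hbase x) (SS_bdd D A B sep hbase x)

lemma ff_mono {x y : X} (hxy : (x, y) ∈ D) :
    ff D A B sep hbase y ≤ ff D A B sep hbase x := by
  apply csInf_le_csInf (SS_bddBelow D A B sep hbase y) (SS_nonempty D A B sep hbase x)
  rintro r (rfl | ⟨s, hx, rfl⟩)
  · exact mem_insert 1 _
  · exact Or.inr ⟨s, U_futC D A B sep hbase s hx hxy, rfl⟩

lemma ff_lower {x : X} {u : List Bool} (hx : x ∈ Vnode D A B sep hbase u) :
    vv u ≤ ff D A B sep hbase x := by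
  apply le_csInf (SS_nonempty D A B sep hbase x)
  rintro r (rfl | ⟨s, hxs, rfl⟩)
  · exact le_of_lt (vv_lt_one u)
  · by_contra hlt
    push_neg at hlt
    have hU : x ∈ Unode D A B sep hbase u :=
      key' D A B sep hbase hlt (U_sub_C D A B sep hbase s hxs)
    exact absurd (Set.mem_inter hU hx)
      (by rw [UV_disj D A B sep hbase u]; exact notMem_empty x)

lemma lov_replicate (n : ℕ) : lov (List.replicate n false) = 0 := by
  induction n with
  | zero => simp [lov, iv]
  | succ n ih => rw [List.replicate_succ, lov_false, ih]

lemma ff_zero_on_A {a : X} (ha : a ∈ A) : ff D A B sep hbase a = 0 := by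
  refine le_antisymm ?_ (ff_nonneg D A B sep hbase a)
  by_contra h
  push_neg at h
  obtain ⟨n, hn⟩ := exists_pow_lt_of_lt_one h (by norm_num : (1:ℝ)/2 < 1)
  have h1 : ff D A B sep hbase a ≤ vv (List.replicate n false) :=
    ff_le_of_memU D A B sep hbase (A_sub_U D A B sep hbase (List.replicate n false) ha)
  have h2 : vv (List.replicate n false) < (1/2 : ℝ)^n := by
    have h3 := vv_lt_hiv (List.replicate n false)
    have h4 := width_eq (List.replicate n false)
    rw [lov_replicate, List.length_replicate] at h4
    -- hiv = (1/2)^n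
    have : hiv (List.replicate n false) = (1/2:ℝ)^n := by linarith
    linarith
  linarith

lemma ff_one_on_B {b : X} (hb : b ∈ B) : ff D A B sep hbase b = 1 := by
  have hSS : SS D A B sep hbase b = {1} := by
    rw [SS]
    have : {r : ℝ | ∃ s, b ∈ Unode D A B sep hbase s ∧ vv s = r} = ∅ := by
      rw [Set.eq_empty_iff_forall_notMem]
      rintro r ⟨s, hbs, _⟩
      exact U_disj_B D A B sep hbase s hb hbs
    rw [this, LawfulSingleton.insert_empty_eq]
  rw [ff, hSS, csInf_singleton]

lemma ff_continuous : Continuous (ff D A B sep hbase) := by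
  rw [continuous_iff_continuousAt]
  intro x
  rw [ContinuousAt]
  apply tendsto_order.2
  constructor
  · -- lower semicontinuity
    intro c hc
    rcases lt_or_ge c 0 with h0 | h0
    · exact Filter.Eventually.of_forall fun y =>
        lt_of_lt_of_le h0 (ff_nonneg D A B sep hbase y)
    · have h1 : ff D A B sep hbase x ≤ 1 := ff_le_one D A B sep hbase x
      set v₁ : ℝ := c + (ff D A B sep hbase x - c)/2 with hv₁
      obtain ⟨u, hu1, hu2⟩ := exists_vv_between (α := c) (β := v₁) h0
        (by rw [hv₁]; linarith) (by rw [hv₁]; linarith)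
      obtain ⟨w, hw1, hw2⟩ := exists_vv_between (α := v₁) (β := ff D A B sep hbase x)
        (by rw [hv₁]; linarith) h1 (by rw [hv₁]; linarith)
      have hxV : x ∈ Vnode D A B sep hbase u := by
        by_contra hxV
        have hxC : x ∈ Cnode D A B sep hbase u := hxV
        have hxU : x ∈ Unode D A B sep hbase w :=
          key' D A B sep hbase (lt_trans hu2 hw1) hxC
        have := ff_le_of_memU D A B sep hbase hxU
        linarith
      have hev : ∀ᶠ y in 𝓝 x, y ∈ Vnode D A B sep hbase u :=
        (V_open D A B sep hbase u).mem_nhds hxV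
      exact hev.mono fun y hy => lt_of_lt_of_le hu1 (ff_lower D A B sep hbase hy)
  · -- upper semicontinuity
    intro c hc
    obtain ⟨r, hr, hrc⟩ := exists_lt_of_csInf_lt (SS_nonempty D A B sep hbase x) hc
    rcases hr with rfl | ⟨s, hxs, rfl⟩
    · exact Filter.Eventually.of_forall fun y =>
        lt_of_le_of_lt (ff_le_one D A B sep hbase y) hrc
    · have hev : ∀ᶠ y in 𝓝 x, y ∈ Unode D A B sep hbase s :=
        (U_open D A B sep hbase s).mem_nhds hxs
      exact hev.mono fun y hy => lt_of_le_of_lt (ff_le_of_memU D A B sep hbase hy) hrc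





variable {X : Type*} [MetricSpace X]

theorem urysohn_mono [LocallyCompactSpace X] [SigmaCompactSpace X]
    {D : Set (X × X)} {A B : Set X} (hD : IsPre D)
    (hA : IsClosed A) (hAfut : futC D A) (hB : IsClosed B) (hBfut : futC (transp D) B)
    (hAB : A ∩ B = ∅) :
    ∃ f : X → ℝ, Continuous f ∧ (∀ x y : X, (x, y) ∈ D → f y ≤ f x) ∧
      (∀ a ∈ A, f a = 0) ∧ (∀ b ∈ B, f b = 1) := by
  have hbase : GoodPair D A B A B := ⟨hA, hAfut, hB, hBfut, subset_rfl, subset_rfl, hAB⟩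
  have hsep : ∀ cp : GP D A B, ∃ uv : Set X × Set X, SepProps D cp.1 uv := by
    rintro ⟨⟨Cf, Pp⟩, h⟩
    obtain ⟨U, V, hU, hV, hCU, hPV, hUV, hUf, hVf⟩ :=
      global_normality hD h.1 h.2.1 h.2.2.1 h.2.2.2.1 h.2.2.2.2.2.2
    exact ⟨(U, V), hU, hV, hCU, hPV, hUV, hUf, hVf⟩
  let sep : ∀ cp : GP D A B, {uv : Set X × Set X // SepProps D cp.1 uv} := fun cp =>
    ⟨Classical.choose (hsep cp), Classical.choose_spec (hsep cp)⟩
  exact ⟨ff D A B sep hbase, ff_continuous D A B sep hbase,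
    fun x y hxy => ff_mono D A B sep hbase hxy,
    fun a ha => ff_zero_on_A D A B sep hbase ha,
    fun b hb => ff_one_on_B D A B sep hbase hb⟩



set_option linter.unusedSectionVars false

variable {X : Type*} [MetricSpace X]

/-- compactness radius -/
noncomputable def cradius (x : X) : ℝ :=
  sSup {r : ℝ | r ≤ 1 ∧ IsCompact (closedBall x r)}

lemma cradius_set_nonempty (x : X) :
    {r : ℝ | r ≤ 1 ∧ IsCompact (closedBall x r)}.Nonempty :=
  ⟨0, by norm_num, by rw [closedBall_zero]; exact isCompact_singleton⟩

lemma cradius_set_bdd (x : X) :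
    BddAbove {r : ℝ | r ≤ 1 ∧ IsCompact (closedBall x r)} :=
  ⟨1, fun r hr => hr.1⟩

lemma cradius_le_one (x : X) : cradius x ≤ 1 :=
  csSup_le (cradius_set_nonempty x) (fun r hr => hr.1)

lemma cradius_nonneg' (x : X) : 0 ≤ cradius x :=
  le_csSup (cradius_set_bdd x)
    ⟨by norm_num, by rw [closedBall_zero]; exact isCompact_singleton⟩

lemma cradius_pos [LocallyCompactSpace X] (x : X) : 0 < cradius x := by
  obtain ⟨r, hr, hcpt⟩ := exists_isCompact_closedBall x
  have hmem : min r 1 ∈ {r : ℝ | r ≤ 1 ∧ IsCompact (closedBall x r)} :=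
    ⟨min_le_right r 1, hcpt.of_isClosed_subset isClosed_closedBall
      (closedBall_subset_closedBall (min_le_left r 1))⟩
  exact lt_of_lt_of_le (lt_min hr one_pos) (le_csSup (cradius_set_bdd x) hmem)

lemma isCompact_of_lt_cradius {x : X} {s : ℝ} (hs : s < cradius x) :
    IsCompact (closedBall x s) := by
  obtain ⟨r, hr, hsr⟩ := exists_lt_of_lt_csSup (cradius_set_nonempty x) hs
  exact hr.2.of_isClosed_subset isClosed_closedBall (closedBall_subset_closedBall (le_of_lt hsr))

lemma cradius_le_add (x y : X) : cradius x ≤ cradius y + dist x y := by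
  apply csSup_le (cradius_set_nonempty x)
  intro r hr
  rcases le_or_gt r (dist x y) with h | h
  · linarith [cradius_nonneg' y]
  · have hmem : r - dist x y ∈ {t : ℝ | t ≤ 1 ∧ IsCompact (closedBall y t)} := by
      refine ⟨by linarith [hr.1, dist_nonneg (x := x) (y := y)], ?_⟩
      apply hr.2.of_isClosed_subset isClosed_closedBall
      intro z hz
      rw [mem_closedBall] at hz ⊢
      have := dist_triangle z y x
      rw [dist_comm y x] at this
      linarith
    have h5 : r - dist x y ≤ cradius y := le_csSup (cradius_set_bdd y) hmem
    linarith

lemma cradius_lipschitz : LipschitzWith 1 (cradius (X := X)) := by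
  apply LipschitzWith.of_dist_le_mul
  intro x y
  rw [Real.dist_eq, NNReal.coe_one, one_mul, abs_sub_le_iff]
  constructor
  · linarith [cradius_le_add x y]
  · linarith [cradius_le_add y x, dist_comm x y]

lemma cradius_continuous : Continuous (cradius (X := X)) :=
  cradius_lipschitz.continuous

/-- the exhaustion sets -/
noncomputable def kball [Inhabited X] : ℕ → Set X
  | 0 => {default}
  | n + 1 => ⋃ x ∈ kball n, closedBall x (cradius x / 2)

lemma kball_subset_succ [Inhabited X] (n : ℕ) : kball (X := X) n ⊆ kball (n + 1) := by
  intro x hx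
  exact mem_biUnion hx (mem_closedBall_self (by linarith [cradius_nonneg' x]))

lemma default_mem_kball [Inhabited X] (n : ℕ) : (default : X) ∈ kball n := by
  induction n with
  | zero => rfl
  | succ n ih => exact kball_subset_succ n ih

lemma isCompact_kball [LocallyCompactSpace X] [Inhabited X] (n : ℕ) :
    IsCompact (kball (X := X) n) := by
  induction n with
  | zero => exact isCompact_singleton
  | succ n ih =>
    -- closedness
    have hclosed : IsClosed (kball (X := X) (n + 1)) := by
      apply IsSeqClosed.isClosed
      intro y q hy hq
      have : ∀ j, ∃ x ∈ kball (X := X) n, y j ∈ closedBall x (cradius x / 2) := by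
        intro j
        obtain ⟨s, hs⟩ := mem_iUnion.1 (hy j)
        simp only [mem_iUnion, exists_prop] at hs
        exact ⟨s, hs.1, hs.2⟩
      choose x hxK hyx using this
      obtain ⟨a, haK, φ, hφ, ha⟩ := ih.tendsto_subseq hxK
      have hbound : ∀ j, dist q a ≤ dist q (y (φ j)) + cradius (x (φ j)) / 2 +
          dist (x (φ j)) a := by
        intro j
        have h1 := dist_triangle q (y (φ j)) a
        have h2 := dist_triangle (y (φ j)) (x (φ j)) a
        have h3 : dist (y (φ j)) (x (φ j)) ≤ cradius (x (φ j)) / 2 :=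
          mem_closedBall.1 (hyx (φ j))
        linarith
      have htend : Tendsto (fun j => dist q (y (φ j)) + cradius (x (φ j)) / 2 +
          dist (x (φ j)) a) atTop (𝓝 (0 + cradius a / 2 + 0)) := by
        apply Tendsto.add
        apply Tendsto.add
        · have h := tendsto_iff_dist_tendsto_zero.1 (hq.comp hφ.tendsto_atTop)
          simpa [Function.comp, dist_comm] using h
        · have : Tendsto (fun j => cradius (x (φ j))) atTop (𝓝 (cradius a)) :=
            (cradius_continuous.tendsto a).comp ha
          exact this.div_const 2
        · exact tendsto_iff_dist_tendsto_zero.1 ha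
      have hdist : dist q a ≤ cradius a / 2 := by
        have := ge_of_tendsto' htend hbound
        linarith
      exact mem_biUnion haK (mem_closedBall.2 hdist)
    -- totally bounded part: cover by finitely many compact balls
    have hne : (kball (X := X) n).Nonempty := ⟨default, default_mem_kball n⟩
    obtain ⟨z, hzK, hzmin'⟩ := ih.exists_isMinOn hne cradius_continuous.continuousOn
    have hzmin := isMinOn_iff.1 hzmin'
    have hm : 0 < cradius z := cradius_pos z
    set δ := cradius z / 8 with hδ
    obtain ⟨t, htK, hcov⟩ := ih.elim_nhds_subcover (fun a => ball a δ)
      (fun a _ => ball_mem_nhds a (by positivity))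
    have hsub : kball (X := X) (n + 1) ⊆ ⋃ a ∈ t, closedBall a (cradius a * (3/4)) := by
      intro y hy
      obtain ⟨x, hx⟩ := mem_iUnion.1 hy
      simp only [mem_iUnion, exists_prop] at hx
      obtain ⟨hxK, hyx⟩ := hx
      obtain ⟨a, hat, hxa⟩ := mem_iUnion₂.1 (hcov hxK)
      refine mem_biUnion hat ?_
      rw [mem_closedBall] at hyx ⊢
      rw [mem_ball] at hxa
      have h1 : cradius x ≤ cradius a + dist x a := cradius_le_add x a
      have h2 : cradius z ≤ cradius a := hzmin a (htK a hat)
      have h3 := dist_triangle y x a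
      have h4 : 0 < cradius a := lt_of_lt_of_le hm h2
      -- dist y a ≤ cradius x / 2 + δ ≤ (cradius a + δ)/2 + δ ≤ 3/4 cradius a
      have : dist y a ≤ cradius a / 2 + (3/2) * δ := by
        rw [hδ]; linarith
      rw [hδ] at this
      linarith
    apply IsCompact.of_isClosed_subset ?_ hclosed hsub
    apply t.isCompact_biUnion
    intro a hat
    apply isCompact_of_lt_cradius
    have h2 : cradius z ≤ cradius a := hzmin a (htK a hat)
    linarith [lt_of_lt_of_le hm h2]

lemma isOpen_kball_union [LocallyCompactSpace X] [Inhabited X] :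
    IsOpen (⋃ n, kball (X := X) n) := by
  rw [isOpen_iff_forall_mem_open]
  intro x hx
  obtain ⟨n, hn⟩ := mem_iUnion.1 hx
  refine ⟨ball x (cradius x / 2), ?_, isOpen_ball, ?_⟩
  · intro z hz
    exact mem_iUnion.2 ⟨n + 1, mem_biUnion hn (ball_subset_closedBall hz)⟩
  · exact mem_ball_self (by linarith [cradius_pos x])

lemma isClosed_kball_union [LocallyCompactSpace X] [Inhabited X] :
    IsClosed (⋃ n, kball (X := X) n) := by
  rw [← closure_subset_iff_isClosed]
  intro y hy
  have hpos : 0 < cradius y / 8 := by linarith [cradius_pos y]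
  obtain ⟨z, hzB, hzS⟩ := mem_closure_iff.1 hy (ball y (cradius y / 8)) isOpen_ball
    (mem_ball_self hpos)
  obtain ⟨n, hn⟩ := mem_iUnion.1 hzS
  refine mem_iUnion.2 ⟨n + 1, mem_biUnion hn ?_⟩
  rw [mem_closedBall]
  have h1 : dist z y < cradius y / 8 := mem_ball.1 hzB
  have h2 : cradius y ≤ cradius z + dist y z := cradius_le_add y z
  rw [dist_comm y z] at h2
  rw [dist_comm y z]
  linarith [cradius_pos y]

theorem sigmaCompact_of_connected [LocallyCompactSpace X] [ConnectedSpace X] :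
    SigmaCompactSpace X := by
  rcases isEmpty_or_nonempty X with hX | hX
  · refine ⟨⟨fun _ => ∅, fun _ => isCompact_empty, ?_⟩⟩
    rw [Set.iUnion_empty, eq_comm, Set.univ_eq_empty_iff]
    exact hX
  · have : Inhabited X := Classical.inhabited_of_nonempty hX
    have hclopen : IsClopen (⋃ n, kball (X := X) n) :=
      ⟨isClosed_kball_union, isOpen_kball_union⟩
    have huniv : (⋃ n, kball (X := X) n) = univ := by
      apply hclopen.eq_univ
      exact ⟨default, mem_iUnion.2 ⟨0, rfl⟩⟩
    exact ⟨⟨kball, isCompact_kball, huniv⟩⟩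



end AuslanderAux
end AuslanderAux
/-- A_F is an F-stream and it is the smallest F-stream. -/
theorem stmt_4 {X : Type*} [MetricSpace X] [LocallyCompactSpace X] [ConnectedSpace X]
    (F : ℝ → X → X) (hF : IsFlow F) :
    IsStream F (auslanderRel F) ∧
      ∀ D : Set (X × X), IsStream F D → auslanderRel F ⊆ D := by
  constructor
  · refine ⟨?_, ?_, ?_, ?_⟩
    · exact fun x L _ => le_refl _
    · exact fun x y z hxy hyz L hL => le_trans (hyz L hL) (hxy L hL)
    · have heq : auslanderRel F =
          ⋂ L : {L : X → ℝ // IsLyapunov F L}, {z : X × X | L.1 z.2 ≤ L.1 z.1} := by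
        ext z
        simp only [auslanderRel, Set.mem_setOf_eq, Set.mem_iInter, Subtype.forall]
      rw [heq]
      exact isClosed_iInter fun L =>
        isClosed_le (L.2.1.comp continuous_snd) (L.2.1.comp continuous_fst)
    · intro z hz L hL
      have hsub : orbitRel F ⊆ {w : X × X | L w.2 ≤ L w.1} :=
        fun w hw => hL.2 w.1 w.2 hw
      have hcl : IsClosed {w : X × X | L w.2 ≤ L w.1} :=
        isClosed_le (hL.1.comp continuous_snd) (hL.1.comp continuous_fst)
      exact closure_minimal hsub hcl hz
  · rintro D ⟨hrefl, htrans, hclosed, hprol⟩ z hz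
    by_contra hzD
    have hsig : SigmaCompactSpace X := AuslanderAux.sigmaCompact_of_connected
    have hPre : AuslanderAux.IsPre D :=
      ⟨hrefl, fun x y w a b => htrans x y w a b, hclosed⟩
    set A : Set X := {y | (z.1, y) ∈ D} with hAdef
    set B : Set X := {x | (x, z.2) ∈ D} with hBdef
    have hA : IsClosed A := hclosed.preimage (Continuous.prodMk_right z.1)
    have hB : IsClosed B := hclosed.preimage (continuous_id.prodMk continuous_const)
    have hAfut : AuslanderAux.futC D A := fun x y hx hxy => htrans z.1 x y hx hxy
    have hBfut : AuslanderAux.futC (AuslanderAux.transp D) B :=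
      fun x y hx hxy => htrans y x z.2 hxy hx
    have hAB : A ∩ B = ∅ := by
      rw [Set.eq_empty_iff_forall_notMem]
      rintro w ⟨hw1, hw2⟩
      exact hzD (by simpa using htrans z.1 w z.2 hw1 hw2)
    obtain ⟨f, hfc, hfmono, hfA, hfB⟩ :=
      AuslanderAux.urysohn_mono hPre hA hAfut hB hBfut hAB
    have hLyap : IsLyapunov F f := by
      refine ⟨hfc, fun p q hq => ?_⟩
      have hpq : (p, q) ∈ prolongRel F := subset_closure hq
      exact hfmono p q (hprol hpq)
    have h1 : f z.1 = 0 := hfA z.1 (hrefl z.1)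
    have h2 : f z.2 = 1 := hfB z.2 (hrefl z.2)
    have := hz f hLyap
    rw [h1, h2] at this
    linarith
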